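/- For each n, the map I ↦ (number of nondecreasing parking functions of length n with packed evaluation I) is invariant under conjugation-reversal symmetry: the number of π ∈ NDPFₙ with packed evaluation I equals the number with packed evaluation Ĩ (the conjugate composition of the reversed composition). -/

import Mathlib

/-- The break set of a word `π : Fin n → Fin n` (positions `k ∈ {1,…,n−1}` where
`π_{k} ≠ π_{k+1}`, 1-indexed; 0-indexed, `0 < k` and `π (k-1) ≠ π k`).
For a nondecreasing parking function this is the descent set of its packed
evaluation, regarded as a composition of `n`. -/
def breakSet {n : ℕ} [NeZero n] (π : Fin n → Fin n) : Finset (Fin n) :=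
  Finset.univ.filter (fun k => 0 < k ∧ π (k - 1) ≠ π k)

set_option linter.unusedSectionVars false

namespace NDPFAux

open Finset

variable {n : ℕ} [NeZero n]

lemma sub_one_val {k : Fin n} (hk : 0 < k) : ((k - 1 : Fin n) : ℕ) = (k : ℕ) - 1 := by
  have hn := k.2
  have hk' : 0 < (k : ℕ) := hk
  have h2 : 2 ≤ n := by omega
  have h1 : ((1 : Fin n) : ℕ) = 1 := by rw [Fin.val_one']; exact Nat.mod_eq_of_lt (by omega)
  calc ((k - 1 : Fin n) : ℕ) = ((n - ((1 : Fin n) : ℕ)) + (k : ℕ)) % n := by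
        rw [Fin.sub_def]
    _ = (((k : ℕ) - 1) + n) % n := by rw [h1]; congr 1; omega
    _ = ((k : ℕ) - 1) % n := Nat.add_mod_right _ _
    _ = (k : ℕ) - 1 := Nat.mod_eq_of_lt (by omega)

lemma neg_val {k : Fin n} (hk : 0 < k) : ((-k : Fin n) : ℕ) = n - (k : ℕ) := by
  have hn := k.2
  have hk' : 0 < (k : ℕ) := hk
  rw [Fin.coe_neg]
  exact Nat.mod_eq_of_lt (by omega)

lemma sub_one_lt {k : Fin n} (hk : 0 < k) : (k - 1 : Fin n) < k := by
  rw [Fin.lt_def, sub_one_val hk]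
  have : 0 < (k : ℕ) := hk
  omega

lemma le_sub_one {j k : Fin n} (hk : 0 < k) (hjk : j < k) : j ≤ k - 1 := by
  rw [Fin.le_def, sub_one_val hk]
  have : (j : ℕ) < (k : ℕ) := hjk
  omega

/-- membership in breakSet -/
lemma mem_breakSet_iff {π : Fin n → Fin n} {k : Fin n} :
    k ∈ breakSet π ↔ 0 < k ∧ π (k - 1) ≠ π k := by
  simp [breakSet]

lemma ndpf_zero {π : Fin n → Fin n} (hle : ∀ i : Fin n, (π i : ℕ) ≤ (i : ℕ)) : π 0 = 0 := by
  have := hle 0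
  exact Fin.ext (by simpa using this)

lemma break_lt {π : Fin n → Fin n} (hmono : ∀ i j : Fin n, i ≤ j → π i ≤ π j)
    {k j : Fin n} (hk : 0 < k) (hne : π (k - 1) ≠ π k) (hj : j ≤ k - 1) : π j < π k :=
  lt_of_le_of_lt (hmono _ _ hj)
    (lt_of_le_of_ne (hmono _ _ (le_of_lt (sub_one_lt hk))) hne)

lemma strictMonoOn_break {π : Fin n → Fin n} (hmono : ∀ i j : Fin n, i ≤ j → π i ≤ π j)
    {k k' : Fin n} (hk' : k' ∈ breakSet π) (hlt : k < k') : π k < π k' := by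
  obtain ⟨h0, hne⟩ := mem_breakSet_iff.1 hk'
  exact break_lt hmono h0 hne (le_sub_one h0 hlt)

lemma pos_break {π : Fin n → Fin n} (hmono : ∀ i j : Fin n, i ≤ j → π i ≤ π j)
    (hle : ∀ i : Fin n, (π i : ℕ) ≤ (i : ℕ)) {k : Fin n} (hk : k ∈ breakSet π) :
    0 < π k := by
  obtain ⟨h0, _⟩ := mem_breakSet_iff.1 hk
  have := strictMonoOn_break hmono hk h0
  rw [ndpf_zero hle] at this
  exact this



lemma emb_le_iff {X : Finset (Fin n)} {k : ℕ} (h : X.card = k) (i : Fin k) (s : Fin n) :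
    X.orderEmbOfFin h i ≤ s ↔ (i : ℕ) < (X ∩ Finset.Iic s).card := by
  constructor
  · intro hle
    have hsub : (Finset.Iic i).image (X.orderEmbOfFin h) ⊆ X ∩ Finset.Iic s := by
      intro x hx
      simp only [Finset.mem_image, Finset.mem_Iic] at hx
      obtain ⟨t, ht, rfl⟩ := hx
      exact Finset.mem_inter.2 ⟨X.orderEmbOfFin_mem h t,
        Finset.mem_Iic.2 (le_trans ((X.orderEmbOfFin h).monotone ht) hle)⟩
    have hc := Finset.card_le_card hsub
    rwa [Finset.card_image_of_injective _ (X.orderEmbOfFin h).injective, Fin.card_Iic] at hc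
  · intro hlt
    by_contra hns
    push_neg at hns
    have hsub : X ∩ Finset.Iic s ⊆ (Finset.Iio i).image (X.orderEmbOfFin h) := by
      intro x hx
      obtain ⟨hxX, hxs⟩ := Finset.mem_inter.1 hx
      obtain ⟨t, rfl⟩ : ∃ t, X.orderEmbOfFin h t = x := by
        have hr := X.range_orderEmbOfFin h
        have : x ∈ Set.range (X.orderEmbOfFin h) := by rw [hr]; exact hxX
        exact this
      refine Finset.mem_image.2 ⟨t, Finset.mem_Iio.2 ?_, rfl⟩
      by_contra hti
      push_neg at hti
      exact absurd (le_trans ((X.orderEmbOfFin h).monotone hti) (Finset.mem_Iic.1 hxs))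
        (not_le.2 hns)
    have hc := Finset.card_le_card hsub
    have him := Finset.card_image_le (s := Finset.Iio i) (f := X.orderEmbOfFin h)
    rw [Fin.card_Iio] at him
    omega

lemma card_inter_Iic_emb {X : Finset (Fin n)} {k : ℕ} (h : X.card = k) (i : Fin k) :
    (X ∩ Finset.Iic (X.orderEmbOfFin h i)).card = (i : ℕ) + 1 := by
  have h1 : (i : ℕ) < (X ∩ Finset.Iic (X.orderEmbOfFin h i)).card :=
    (emb_le_iff h i _).1 le_rfl
  by_contra hne
  have h2 : (i : ℕ) + 1 < (X ∩ Finset.Iic (X.orderEmbOfFin h i)).card := by omega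
  have hk : (i : ℕ) + 1 < k := by
    have : (X ∩ Finset.Iic (X.orderEmbOfFin h i)).card ≤ X.card :=
      Finset.card_le_card (Finset.inter_subset_left)
    omega
  have h3 := (emb_le_iff h ⟨(i : ℕ) + 1, hk⟩ (X.orderEmbOfFin h i)).2 h2
  have h4 := (X.orderEmbOfFin h).le_iff_le.1 h3
  simp [Fin.le_def] at h4

lemma Iic_eq_insert {k : Fin n} (hk : 0 < k) :
    Finset.Iic k = insert k (Finset.Iic (k - 1)) := by
  have hkv : 0 < (k : ℕ) := hk
  ext j
  simp only [Finset.mem_Iic, Finset.mem_insert, Fin.le_def, Fin.ext_iff, sub_one_val hk]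
  omega

lemma card_inter_Iic_succ (X : Finset (Fin n)) {k : Fin n} (hk : 0 < k) :
    (X ∩ Finset.Iic k).card =
      (X ∩ Finset.Iic (k - 1)).card + (if k ∈ X then 1 else 0) := by
  have hknot : k ∉ Finset.Iic (k - 1) ∩ X := by
    intro h
    have := Finset.mem_Iic.1 (Finset.mem_inter.1 h).1
    rw [Fin.le_def, sub_one_val hk] at this
    have hkv : 0 < (k : ℕ) := hk
    omega
  rw [Iic_eq_insert hk, Finset.inter_comm]
  by_cases hX : k ∈ X
  · rw [if_pos hX, Finset.insert_inter_of_mem hX, Finset.card_insert_of_notMem hknot,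
      Finset.inter_comm]
  · rw [if_neg hX, Finset.insert_inter_of_notMem hX, Finset.inter_comm, Nat.add_zero]



/-- the subset-side predicate -/
def SSpred (D V : Finset (Fin n)) : Prop :=
  V.card = D.card ∧ (∀ v ∈ V, 0 < v) ∧
    ∀ s : Fin n, (D ∩ Finset.Iic s).card ≤ (V ∩ Finset.Iic s).card

lemma cardA (D : Finset (Fin n)) (hD : ∀ k ∈ D, 0 < k) :
    Nat.card {π : Fin n → Fin n //
      ((∀ i j : Fin n, i ≤ j → π i ≤ π j) ∧ ∀ i : Fin n, (π i : ℕ) ≤ (i : ℕ)) ∧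
      breakSet π = D} = Nat.card {V : Finset (Fin n) // SSpred D V} := by
  have injOnD : ∀ (π : Fin n → Fin n),
      ((∀ i j : Fin n, i ≤ j → π i ≤ π j) ∧ ∀ i : Fin n, (π i : ℕ) ≤ (i : ℕ)) →
      breakSet π = D → Set.InjOn π ↑D := by
    intro π ⟨hmono, hle⟩ hbrk a ha b hb hab
    rcases lt_trichotomy a b with h | h | h
    · exact absurd hab (ne_of_lt (strictMonoOn_break hmono (hbrk ▸ hb) h))
    · exact h
    · exact absurd hab.symm (ne_of_lt (strictMonoOn_break hmono (hbrk ▸ ha) h))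
  have himg : ∀ (π : Fin n → Fin n)
      (h : ((∀ i j : Fin n, i ≤ j → π i ≤ π j) ∧ ∀ i : Fin n, (π i : ℕ) ≤ (i : ℕ)))
      (hbrk : breakSet π = D), SSpred D (D.image π) := by
    intro π h hbrk
    obtain ⟨hmono, hle⟩ := h
    refine ⟨Finset.card_image_of_injOn (injOnD π ⟨hmono, hle⟩ hbrk), ?_, ?_⟩
    · intro v hv
      obtain ⟨k, hk, rfl⟩ := Finset.mem_image.1 hv
      exact pos_break hmono hle (hbrk ▸ hk)
    · intro s
      have hsub : (D ∩ Finset.Iic s).image π ⊆ (D.image π) ∩ Finset.Iic s := by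
        intro x hx
        obtain ⟨k, hk, rfl⟩ := Finset.mem_image.1 hx
        obtain ⟨hkD, hks⟩ := Finset.mem_inter.1 hk
        refine Finset.mem_inter.2 ⟨Finset.mem_image_of_mem _ hkD, Finset.mem_Iic.2 ?_⟩
        exact le_trans (Fin.le_def.2 (hle k)) (Finset.mem_Iic.1 hks)
      have := Finset.card_le_card hsub
      rwa [Finset.card_image_of_injOn
        (Set.InjOn.mono (by simp) (injOnD π ⟨hmono, hle⟩ hbrk))] at this
  refine Nat.card_eq_of_bijective (fun p => ⟨D.image p.1, himg p.1 p.2.1 p.2.2⟩) ⟨?_, ?_⟩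
  · -- injective
    rintro ⟨π, ⟨hmono, hle⟩, hbrk⟩ ⟨π', ⟨hmono', hle'⟩, hbrk'⟩ heq
    have hVeq : D.image π = D.image π' := congrArg Subtype.val heq
    -- equality on D via uniqueness of the order embedding
    have hV : (D.image π).card = D.card := Finset.card_image_of_injOn (injOnD π ⟨hmono, hle⟩ hbrk)
    have e := D.orderEmbOfFin (rfl : D.card = D.card)
    have hFm : StrictMono (fun i => π (D.orderEmbOfFin rfl i)) := by
      intro i j hij
      refine strictMonoOn_break hmono ?_ ((D.orderEmbOfFin rfl).strictMono hij)
      rw [hbrk]; exact D.orderEmbOfFin_mem rfl j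
    have hFm' : StrictMono (fun i => π' (D.orderEmbOfFin rfl i)) := by
      intro i j hij
      refine strictMonoOn_break hmono' ?_ ((D.orderEmbOfFin rfl).strictMono hij)
      rw [hbrk']; exact D.orderEmbOfFin_mem rfl j
    have hF : (fun i => π (D.orderEmbOfFin rfl i)) = (D.image π).orderEmbOfFin hV :=
      Finset.orderEmbOfFin_unique hV
        (fun i => Finset.mem_image_of_mem _ (D.orderEmbOfFin_mem rfl i)) hFm
    have hF' : (fun i => π' (D.orderEmbOfFin rfl i)) = (D.image π).orderEmbOfFin hV :=
      Finset.orderEmbOfFin_unique hV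
        (fun i => by rw [hVeq]; exact Finset.mem_image_of_mem _ (D.orderEmbOfFin_mem rfl i)) hFm'
    have honD : ∀ k ∈ D, π k = π' k := by
      intro k hk
      have : k ∈ Set.range (D.orderEmbOfFin (rfl : D.card = D.card)) := by
        rw [D.range_orderEmbOfFin rfl]; exact hk
      obtain ⟨i, rfl⟩ := this
      calc π (D.orderEmbOfFin rfl i) = (D.image π).orderEmbOfFin hV i := congrFun hF i
        _ = π' (D.orderEmbOfFin rfl i) := (congrFun hF' i).symm
    -- equality everywhere by strong induction on the index
    have key : ∀ m : ℕ, ∀ j : Fin n, (j : ℕ) ≤ m → π j = π' j := by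
      intro m
      induction m with
      | zero =>
        intro j hj
        have : j = 0 := Fin.ext (by rw [Fin.val_zero]; omega)
        subst this
        rw [ndpf_zero hle, ndpf_zero hle']
      | succ m ih =>
        intro j hj
        by_cases hj0 : j = 0
        · subst hj0; rw [ndpf_zero hle, ndpf_zero hle']
        have hjpos : 0 < j := (Fin.pos_iff_ne_zero' j).2 hj0
        by_cases hjD : j ∈ D
        · exact honD j hjD
        · have h1 : π (j - 1) = π j := by
            have hnb : j ∉ breakSet π := by rw [hbrk]; exact hjD
            rw [mem_breakSet_iff] at hnb
            push_neg at hnb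
            exact hnb hjpos
          have h2 : π' (j - 1) = π' j := by
            have hnb : j ∉ breakSet π' := by rw [hbrk']; exact hjD
            rw [mem_breakSet_iff] at hnb
            push_neg at hnb
            exact hnb hjpos
          have hjv : 0 < (j : ℕ) := hjpos
          have hval : ((j - 1 : Fin n) : ℕ) ≤ m := by rw [sub_one_val hjpos]; omega
          rw [← h1, ← h2, ih _ hval]
    exact Subtype.ext (funext fun j => key n j (le_of_lt j.2))
  · -- surjective
    rintro ⟨V, hVcard, hVpos, hVpre⟩
    have h0V : (0 : Fin n) ∉ V := fun h => absurd (hVpos 0 h) (lt_irrefl 0)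
    set W : Finset (Fin n) := insert 0 V with hWdef
    have hW : W.card = D.card + 1 := by
      rw [hWdef, Finset.card_insert_of_notMem h0V, hVcard]
    have hrlt : ∀ j : Fin n, (D ∩ Finset.Iic j).card < D.card + 1 := by
      intro j
      have : (D ∩ Finset.Iic j).card ≤ D.card := Finset.card_le_card Finset.inter_subset_left
      omega
    set π : Fin n → Fin n :=
      fun j => W.orderEmbOfFin hW ⟨(D ∩ Finset.Iic j).card, hrlt j⟩ with hπdef
    have hemb0 : W.orderEmbOfFin hW ⟨0, by omega⟩ = 0 := by
      have h0W : (0 : Fin n) ∈ W := Finset.mem_insert_self _ _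
      refine le_antisymm ?_ (Fin.zero_le _)
      refine (emb_le_iff hW ⟨0, by omega⟩ 0).2 ?_
      refine Finset.card_pos.2 ⟨0, Finset.mem_inter.2 ⟨h0W, Finset.mem_Iic.2 le_rfl⟩⟩
    have hmono : ∀ i j : Fin n, i ≤ j → π i ≤ π j := by
      intro i j hij
      exact (W.orderEmbOfFin hW).monotone (by
        simp only [Fin.mk_le_mk]
        exact Finset.card_le_card
          (Finset.inter_subset_inter le_rfl (Finset.Iic_subset_Iic.2 hij)))
    have hle : ∀ j : Fin n, (π j : ℕ) ≤ (j : ℕ) := by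
      intro j
      rcases Nat.eq_zero_or_pos (D ∩ Finset.Iic j).card with hr | hr
      · have : π j = 0 := by
          rw [hπdef]
          simp only
          rw [show (⟨(D ∩ Finset.Iic j).card, hrlt j⟩ : Fin (D.card + 1)) =
            ⟨0, by omega⟩ from Fin.ext hr, hemb0]
        rw [this]
        simp
      · set r := (D ∩ Finset.Iic j).card with hrdef
        have hrD : r - 1 < D.card := by
          have : r ≤ D.card := Finset.card_le_card Finset.inter_subset_left
          omega
        set k : Fin n := D.orderEmbOfFin rfl ⟨r - 1, hrD⟩ with hkdef
        have hkj : k ≤ j := (emb_le_iff rfl ⟨r - 1, hrD⟩ j).2 (by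
          show r - 1 < r
          omega)
        have hDk : (D ∩ Finset.Iic k).card = r := by
          rw [hkdef, card_inter_Iic_emb rfl ⟨r - 1, hrD⟩]
          show r - 1 + 1 = r
          omega
        have hWk : (W ∩ Finset.Iic k).card = (V ∩ Finset.Iic k).card + 1 := by
          have h0Ik : (0 : Fin n) ∈ Finset.Iic k := Finset.mem_Iic.2 (Fin.zero_le _)
          rw [hWdef, Finset.insert_inter_of_mem h0Ik, Finset.card_insert_of_notMem
            (fun h => h0V (Finset.mem_inter.1 h).1)]
        have hπk : π j ≤ k := by
          refine (emb_le_iff hW ⟨r, hrlt j⟩ k).2 ?_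
          have h5 := hVpre k
          rw [hDk] at h5
          show r < (W ∩ Finset.Iic k).card
          rw [hWk]
          omega
        exact le_trans (Fin.le_def.1 hπk) (Fin.le_def.1 hkj)
      -- end hle
    have hbrkv : ∀ k : Fin n, 0 < k → (π (k - 1) = π k ↔ k ∉ D) := by
      intro k hk
      have hcs := card_inter_Iic_succ D hk
      constructor
      · intro heq hkD
        rw [if_pos hkD] at hcs
        have h6 := (W.orderEmbOfFin hW).injective heq
        have h7 : (D ∩ Finset.Iic (k - 1)).card = (D ∩ Finset.Iic k).card := by
          simpa using congrArg Fin.val h6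
        omega
      · intro hkD
        rw [if_neg hkD, Nat.add_zero] at hcs
        exact congrArg (W.orderEmbOfFin hW)
          (Fin.ext (show (D ∩ Finset.Iic (k - 1)).card = (D ∩ Finset.Iic k).card from hcs.symm))
    have hbrk : breakSet π = D := by
      ext k
      rw [mem_breakSet_iff]
      constructor
      · rintro ⟨hk, hne⟩
        by_contra hkD
        exact hne ((hbrkv k hk).2 hkD)
      · intro hkD
        refine ⟨hD k hkD, ?_⟩
        intro heq
        exact ((hbrkv k (hD k hkD)).1 heq) hkD
    have himgV : D.image π = V := by
      apply Finset.Subset.antisymm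
      · intro v hv
        obtain ⟨k, hkD, rfl⟩ := Finset.mem_image.1 hv
        have hr : 0 < (D ∩ Finset.Iic k).card :=
          Finset.card_pos.2 ⟨k, Finset.mem_inter.2 ⟨hkD, Finset.mem_Iic.2 le_rfl⟩⟩
        have hmem : π k ∈ W := W.orderEmbOfFin_mem hW _
        have hne0 : π k ≠ 0 := by
          intro h0
          have : W.orderEmbOfFin hW ⟨0, by omega⟩ < W.orderEmbOfFin hW
              ⟨(D ∩ Finset.Iic k).card, hrlt k⟩ :=
            (W.orderEmbOfFin hW).strictMono (by simp only [Fin.mk_lt_mk]; omega)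
          rw [hemb0] at this
          rw [show π k = W.orderEmbOfFin hW ⟨(D ∩ Finset.Iic k).card, hrlt k⟩ from rfl] at h0
          rw [h0] at this
          exact absurd this (by simp)
        rcases Finset.mem_insert.1 hmem with h | h
        · exact absurd h hne0
        · exact h
      · intro v hv
        have hvW : v ∈ W := Finset.mem_insert_of_mem hv
        have : v ∈ Set.range (W.orderEmbOfFin hW) := by
          rw [W.range_orderEmbOfFin hW]; exact hvW
        obtain ⟨t, ht⟩ := this
        have ht0 : 0 < (t : ℕ) := by
          rcases Nat.eq_zero_or_pos (t : ℕ) with h | h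
          · exfalso
            have ht' : t = ⟨0, by omega⟩ := Fin.ext h
            rw [ht', hemb0] at ht
            have := hVpos v hv
            rw [← ht] at this
            exact lt_irrefl _ this
          · exact h
        have htD : (t : ℕ) - 1 < D.card := by have := t.2; omega
        set k : Fin n := D.orderEmbOfFin rfl ⟨(t : ℕ) - 1, htD⟩ with hkdef
        have hDk : (D ∩ Finset.Iic k).card = (t : ℕ) := by
          rw [hkdef, card_inter_Iic_emb rfl ⟨(t : ℕ) - 1, htD⟩]
          simp only
          omega
        refine Finset.mem_image.2 ⟨k, D.orderEmbOfFin_mem rfl _, ?_⟩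
        show W.orderEmbOfFin hW ⟨(D ∩ Finset.Iic k).card, hrlt k⟩ = v
        exact (congrArg (W.orderEmbOfFin hW)
          (Fin.ext (show (D ∩ Finset.Iic k).card = (t : ℕ) from hDk))).trans ht
    exact ⟨⟨π, ⟨hmono, hle⟩, hbrk⟩, Subtype.ext himgV⟩



def posF (n : ℕ) [NeZero n] : Finset (Fin n) := Finset.univ.filter (fun k => 0 < k)

def phi (X : Finset (Fin n)) : Finset (Fin n) := posF n \ X.image (fun k => -k)

def rho (s : Fin n) : Fin n := ⟨n - 1 - (s : ℕ), by have := s.isLt; omega⟩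

lemma rho_val (s : Fin n) : ((rho s : Fin n) : ℕ) = n - 1 - (s : ℕ) := rfl

lemma rho_rho (s : Fin n) : rho (rho s) = s := by
  have := s.isLt
  exact Fin.ext (by rw [rho_val, rho_val]; omega)

lemma mem_posF {k : Fin n} : k ∈ posF n ↔ 0 < k := by simp [posF]

lemma card_posF : (posF n).card = n - 1 := by
  have h : posF n = Finset.univ.erase 0 := by
    ext k
    simp [posF, Finset.mem_erase, (Fin.pos_iff_ne_zero' k)]
  rw [h, Finset.card_erase_of_mem (Finset.mem_univ _), Finset.card_univ, Fintype.card_fin]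

lemma mem_phi {X : Finset (Fin n)} {k : Fin n} : k ∈ phi X ↔ 0 < k ∧ -k ∉ X := by
  rw [phi, Finset.mem_sdiff, mem_posF]
  constructor
  · rintro ⟨h1, h2⟩
    refine ⟨h1, fun h => h2 (Finset.mem_image.2 ⟨-k, h, neg_neg k⟩)⟩
  · rintro ⟨h1, h2⟩
    refine ⟨h1, fun h => ?_⟩
    obtain ⟨x, hx, rfl⟩ := Finset.mem_image.1 h
    rw [neg_neg] at h2
    exact h2 hx

lemma neg_image_card (X : Finset (Fin n)) : (X.image (fun k => -k)).card = X.card :=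
  Finset.card_image_of_injective _ neg_injective

lemma neg_image_subset_posF {X : Finset (Fin n)} (hX : ∀ x ∈ X, 0 < x) :
    X.image (fun k => -k) ⊆ posF n := by
  intro k hk
  obtain ⟨x, hx, rfl⟩ := Finset.mem_image.1 hk
  rw [mem_posF, Fin.pos_iff_ne_zero', neg_ne_zero]
  exact ((Fin.pos_iff_ne_zero' x).1 (hX x hx))

lemma card_phi {X : Finset (Fin n)} (hX : ∀ x ∈ X, 0 < x) :
    (phi X).card = (n - 1) - X.card := by
  rw [phi, Finset.card_sdiff_of_subset (neg_image_subset_posF hX), card_posF, neg_image_card]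

lemma phi_pos {X : Finset (Fin n)} : ∀ k ∈ phi X, 0 < k := fun _ hk => (mem_phi.1 hk).1

lemma phi_phi {X : Finset (Fin n)} (hX : ∀ x ∈ X, 0 < x) : phi (phi X) = X := by
  ext k
  rw [mem_phi, mem_phi]
  constructor
  · rintro ⟨h1, h2⟩
    push_neg at h2
    rw [neg_neg] at h2
    by_contra hk
    exact hk (h2 (by
      rw [Fin.pos_iff_ne_zero', neg_ne_zero]
      exact (Fin.pos_iff_ne_zero' k).1 h1))
  · intro hk
    have h1 : 0 < k := hX k hk
    refine ⟨h1, fun h => ?_⟩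
    obtain ⟨h2, h3⟩ := h
    rw [neg_neg] at h3
    exact h3 hk

/-- The key counting identity for the complement-reversal map. -/
lemma phi_count {X : Finset (Fin n)} (hX : ∀ x ∈ X, 0 < x) (s : Fin n) :
    (phi X ∩ Finset.Iic s).card + (X \ Finset.Iic (rho s)).card = (s : ℕ) := by
  have hs := s.isLt
  set A : Finset (Fin n) := posF n ∩ Finset.Iic s with hA
  have hAcard : A.card = (s : ℕ) := by
    have : A = (Finset.Iic s).erase 0 := by
      ext k
      simp only [hA, Finset.mem_inter, mem_posF, Finset.mem_erase, Fin.pos_iff_ne_zero' k]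
    rw [this, Finset.card_erase_of_mem (Finset.mem_Iic.2 (Fin.zero_le s)), Fin.card_Iic]
    omega
  have hsub : phi X ∩ Finset.Iic s ⊆ A := by
    intro k hk
    obtain ⟨h1, h2⟩ := Finset.mem_inter.1 hk
    exact Finset.mem_inter.2 ⟨mem_posF.2 (mem_phi.1 h1).1, h2⟩
  have hB : A \ (phi X ∩ Finset.Iic s) = (X \ Finset.Iic (rho s)).image (fun k => -k) := by
    ext k
    simp only [Finset.mem_sdiff, Finset.mem_inter, Finset.mem_image, hA, mem_posF,
      Finset.mem_Iic, mem_phi]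
    constructor
    · rintro ⟨⟨hk0, hks⟩, hnot⟩
      have hnegk : -k ∈ X := by
        by_contra hcon
        exact hnot ⟨⟨hk0, hcon⟩, hks⟩
      refine ⟨-k, ⟨hnegk, ?_⟩, neg_neg k⟩
      intro hle
      rw [Fin.le_def, rho_val] at hle
      have hkpos : 0 < (k : ℕ) := hk0
      have hnegpos : 0 < (-k : Fin n) := hX _ hnegk
      have hnv : ((-k : Fin n) : ℕ) = n - (k : ℕ) := neg_val hk0
      rw [hnv] at hle
      have hksv : (k : ℕ) ≤ (s : ℕ) := hks
      omega
    · rintro ⟨x, ⟨hxX, hxle⟩, rfl⟩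
      have hxpos : 0 < x := hX x hxX
      have hxv : 0 < (x : ℕ) := hxpos
      have hxlt := x.isLt
      have hnx : ((-x : Fin n) : ℕ) = n - (x : ℕ) := neg_val hxpos
      have hx0 : 0 < (-x : Fin n) := by
        rw [Fin.lt_def, hnx]
        simpa using by omega
      have hxs : (-x : Fin n) ≤ s := by
        rw [Fin.le_def, hnx]
        rw [Fin.le_def, rho_val] at hxle
        omega
      refine ⟨⟨hx0, hxs⟩, ?_⟩
      rintro ⟨⟨-, hnot⟩, -⟩
      rw [neg_neg] at hnot
      exact hnot hxX
  have h1 := Finset.card_sdiff_of_subset hsub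
  rw [hB, Finset.card_image_of_injective _ neg_injective] at h1
  have h2 := Finset.card_le_card hsub
  omega



lemma cardB (D : Finset (Fin n)) (hD : ∀ k ∈ D, 0 < k) :
    Nat.card {V : Finset (Fin n) // SSpred D V} =
      Nat.card {V : Finset (Fin n) // SSpred (phi D) V} := by
  have hDsub : D ⊆ posF n := fun k hk => mem_posF.2 (hD k hk)
  have hDcard : D.card ≤ n - 1 := by
    have := Finset.card_le_card hDsub
    rwa [card_posF] at this
  have hphiDcard : (phi D).card = n - 1 - D.card := card_phi hD
  have main : ∀ (V : Finset (Fin n)), (∀ v ∈ V, 0 < v) → V.card = D.card →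
      (∀ s : Fin n, (D ∩ Finset.Iic s).card ≤ (V ∩ Finset.Iic s).card) →
      SSpred (phi D) (phi V) := by
    intro V hVpos hVcard hVpre
    refine ⟨by rw [card_phi hVpos, card_phi hD, hVcard], phi_pos, ?_⟩
    intro s
    have h1 := phi_count hD s
    have h2 := phi_count hVpos s
    have h3 := Finset.card_sdiff_add_card_inter D (Finset.Iic (rho s))
    have h4 := Finset.card_sdiff_add_card_inter V (Finset.Iic (rho s))
    have h5 := hVpre (rho s)
    omega
  refine Nat.card_eq_of_bijective
    (fun p => ⟨phi p.1, main p.1 p.2.2.1 p.2.1 p.2.2.2⟩) ⟨?_, ?_⟩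
  · rintro ⟨V, hV⟩ ⟨V', hV'⟩ heq
    have h0 : phi V = phi V' := congrArg Subtype.val heq
    have h1 : phi (phi V) = phi (phi V') := congrArg phi h0
    rw [phi_phi hV.2.1, phi_phi hV'.2.1] at h1
    exact Subtype.ext h1
  · rintro ⟨W, hWcard, hWpos, hWpre⟩
    have hphiWpos : ∀ v ∈ phi W, 0 < v := phi_pos
    have hWc : W.card ≤ n - 1 := by
      have : W ⊆ posF n := fun k hk => mem_posF.2 (hWpos k hk)
      have := Finset.card_le_card this
      rwa [card_posF] at this
    have hSD : SSpred D (phi W) := by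
      refine ⟨by rw [card_phi hWpos, hWcard, hphiDcard]; omega, hphiWpos, ?_⟩
      intro s
      have hs := s.isLt
      have hrv : ((rho s : Fin n) : ℕ) = n - 1 - (s : ℕ) := rho_val s
      have h1 := phi_count hWpos s
      have h2 := phi_count hD (rho s)
      rw [rho_rho] at h2
      have h3 := Finset.card_sdiff_add_card_inter D (Finset.Iic s)
      have h4 := Finset.card_sdiff_add_card_inter W (Finset.Iic (rho s))
      have h5 := hWpre (rho s)
      have h6 : W.card = (phi D).card := by rw [hWcard]
      omega
    refine ⟨⟨phi W, hSD⟩, ?_⟩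
    exact Subtype.ext (phi_phi hWpos)

end NDPFAux


/-- The statistic counting nondecreasing parking functions of length `n` by their
packed evaluation is invariant under conjugation-reversal: the number of `π ∈ NDPFₙ`
with packed evaluation `I` equals the number with packed evaluation `Ĩ`.
Compositions of `n` are encoded by their descent sets `D ⊆ {1,…,n−1}` (here as
subsets of nonzero elements of `Fin n`, where in `Fin n` one has `-k = n - k`),
and the descent set of `Ĩ` is the complement of the reversal `{n − i : i ∈ D}`. -/
theorem ndpf_packed_evaluation_symmetry (n : ℕ) [NeZero n] (D : Finset (Fin n))
    (hD : ∀ k ∈ D, 0 < k) :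
    Nat.card {π : Fin n → Fin n //
      ((∀ i j : Fin n, i ≤ j → π i ≤ π j) ∧ ∀ i : Fin n, (π i : ℕ) ≤ (i : ℕ)) ∧
      breakSet π = D} =
    Nat.card {π : Fin n → Fin n //
      ((∀ i j : Fin n, i ≤ j → π i ≤ π j) ∧ ∀ i : Fin n, (π i : ℕ) ≤ (i : ℕ)) ∧
      breakSet π =
        (Finset.univ.filter (fun k : Fin n => 0 < k)) \ (D.image (fun k => -k))} := by
  have hphiD : (Finset.univ.filter (fun k : Fin n => 0 < k)) \ (D.image (fun k => -k))
      = NDPFAux.phi D := rfl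
  rw [NDPFAux.cardA D hD, NDPFAux.cardB D hD, hphiD,
    NDPFAux.cardA (NDPFAux.phi D) NDPFAux.phi_pos]
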